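/- Let c₁, ..., cₙ > 0 and let Q₁ be the n×n symmetric arrowhead matrix with Q₁[1,1] = (n−2)/c₁², Q₁[1,j] = Q₁[j,1] = −1/(c₁cⱼ) for j ≥ 2, Q₁[j,j] = 1/cⱼ² for j ≥ 2, other entries zero. Then Q₁ has exactly n−1 positive eigenvalues and exactly one negative eigenvalue (inertia {n−1, 0, 1}). -/

import Mathlib

open Finset Matrix

lemma detM_aux (n : ℕ) :
    (Matrix.of fun i j : Fin (n+2) => if i = 0 ∧ j = 0 then ((n:ℝ)) else
      if i = 0 ∨ j = 0 then -1 else if i = j then 1 else 0).det = -1 := by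
  set U : Matrix (Fin (n+2)) (Fin 2) ℝ :=
    Matrix.of fun i k => if k = 0 then (if i = 0 then 1 else 0) else (if i = 0 then 0 else -1)
    with hU
  set V : Matrix (Fin 2) (Fin (n+2)) ℝ :=
    Matrix.of fun k j => if k = 0 then (if j = 0 then (n:ℝ)-1 else -1) else (if j = 0 then 1 else 0)
    with hV
  have hM : (Matrix.of fun i j : Fin (n+2) => if i = 0 ∧ j = 0 then ((n:ℝ)) else
      if i = 0 ∨ j = 0 then -1 else if i = j then 1 else 0) = 1 + U * V := by
    ext i j
    simp only [Matrix.of_apply, Matrix.add_apply, Matrix.one_apply, Matrix.mul_apply,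
      Fin.sum_univ_two, U, V]
    norm_num
    split_ifs <;> simp_all
  have h10 : (1 : Fin 2) ≠ 0 := by decide
  have h00 : (V * U) 0 0 = (n:ℝ) - 1 := by
    rw [Matrix.mul_apply]
    rw [Finset.sum_congr rfl (fun k _ => show V 0 k * U k 0 = if k = 0 then (n:ℝ)-1 else 0 by
      simp only [hU, hV, Matrix.of_apply, if_pos rfl]
      split_ifs <;> ring)]
    simp
  have h01 : (V * U) 0 1 = (n:ℝ) + 1 := by
    rw [Matrix.mul_apply]
    rw [Finset.sum_congr rfl (fun k _ => show V 0 k * U k 1 = 1 - (if k = 0 then 1 else 0) by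
      simp only [hU, hV, Matrix.of_apply, if_pos rfl, if_neg h10]
      split_ifs <;> ring)]
    rw [Finset.sum_sub_distrib]
    simp [Finset.card_univ]
    ring
  have h10' : (V * U) 1 0 = 1 := by
    rw [Matrix.mul_apply]
    rw [Finset.sum_congr rfl (fun k _ => show V 1 k * U k 0 = if k = 0 then 1 else 0 by
      simp only [hU, hV, Matrix.of_apply, if_pos rfl, if_neg h10]
      split_ifs <;> ring)]
    simp
  have h11 : (V * U) 1 1 = 0 := by
    rw [Matrix.mul_apply]
    rw [Finset.sum_congr rfl (fun k _ => show V 1 k * U k 1 = 0 by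
      simp only [hU, hV, Matrix.of_apply, if_neg h10]
      split_ifs <;> ring)]
    simp
  rw [hM, Matrix.det_one_add_mul_comm, Matrix.det_fin_two]
  simp only [Matrix.add_apply, Matrix.one_apply, h00, h01, h10', h11]
  norm_num

open Finset in
/-- the arrowhead matrix Q₁ (dimension n + 2, so n + 2 ≥ 2) has
inertia {n+1, 0, 1}: exactly n+1 positive eigenvalues and exactly one negative
eigenvalue. -/
theorem inertia_Q1 (n : ℕ) (c : Fin (n + 2) → ℝ) (hc : ∀ i, 0 < c i)
    (Q : Matrix (Fin (n + 2)) (Fin (n + 2)) ℝ)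
    (hQ : ∀ i j : Fin (n + 2),
      Q i j = if i = 0 ∧ j = 0 then ((n : ℝ) + 2 - 2) / (c 0) ^ 2
        else if i = 0 then -1 / (c 0 * c j)
        else if j = 0 then -1 / (c 0 * c i)
        else if i = j then 1 / (c i) ^ 2 else 0)
    (hHerm : Q.IsHermitian) :
    (univ.filter fun i => 0 < hHerm.eigenvalues i).card = n + 1 ∧
    (univ.filter fun i => hHerm.eigenvalues i = 0).card = 0 ∧
    (univ.filter fun i => hHerm.eigenvalues i < 0).card = 1 := by
  have hc0 : ∀ i, c i ≠ 0 := fun i => (hc i).ne'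
  -- Step 1: Q = D M D where D = diagonal (c ·)⁻¹, M is the normalized arrowhead
  set M : Matrix (Fin (n+2)) (Fin (n+2)) ℝ :=
    Matrix.of fun i j : Fin (n+2) => if i = 0 ∧ j = 0 then ((n:ℝ)) else
      if i = 0 ∨ j = 0 then -1 else if i = j then 1 else 0 with hMdef
  have hQM : Q = Matrix.diagonal (fun i => (c i)⁻¹) * M * Matrix.diagonal (fun i => (c i)⁻¹) := by
    ext i j
    rw [Matrix.mul_diagonal, Matrix.diagonal_mul, hQ, hMdef]
    simp only [Matrix.of_apply]
    rcases eq_or_ne i 0 with hi | hi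
    · subst hi
      rcases eq_or_ne j 0 with hj | hj
      · subst hj
        simp only [and_self, if_true, eq_self_iff_true]
        field_simp
        ring
      · simp only [hj, and_false, if_false, eq_self_iff_true, if_true, true_or, or_false, false_or]
        field_simp
        try ring_nf
    · rcases eq_or_ne j 0 with hj | hj
      · subst hj
        simp only [hi, false_and, if_false, eq_self_iff_true, if_true, true_or, or_false, false_or]
        field_simp
        try ring_nf
      · rcases eq_or_ne i j with hij | hij
        · subst hij
          simp only [hi, false_and, if_false, eq_self_iff_true, if_true, or_false, false_or, mul_one]
          field_simp
          try ring_nf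
        · simp [hi, hj, hij]
  -- Step 2: det Q < 0
  have hdet : Q.det < 0 := by
    rw [hQM, Matrix.det_mul, Matrix.det_mul, Matrix.det_diagonal, detM_aux n]
    have hp : 0 < ∏ i, (c i)⁻¹ := Finset.prod_pos fun i _ => inv_pos.2 (hc i)
    nlinarith
  -- eigenvalue product
  have hprod : ∏ i, hHerm.eigenvalues i < 0 := by
    have := hHerm.det_eq_prod_eigenvalues
    push_cast at this
    rw [this] at hdet
    exact_mod_cast hdet
  have hnz : ∀ i, hHerm.eigenvalues i ≠ 0 := by
    intro i h
    rw [Finset.prod_eq_zero (Finset.mem_univ i) h] at hprod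
    exact lt_irrefl 0 hprod
  -- Step 3: quadratic form on the hyperplane x 0 = 0
  have key : ∀ x : Fin (n+2) → ℝ, x 0 = 0 → x ⬝ᵥ (Q *ᵥ x) = ∑ k, (x k / c k)^2 := by
    intro x hx0
    have hterm : ∀ k l, x k * (Q k l * x l) = if l = k then (x k / c k)^2 else 0 := by
      intro k l
      rw [hQ]
      rcases eq_or_ne k 0 with hk | hk
      · subst hk
        simp [hx0]
      · rcases eq_or_ne l 0 with hl | hl
        · subst hl
          simp [hx0, Ne.symm hk]
        · rcases eq_or_ne l k with hlk | hlk
          · subst hlk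
            simp only [hk, hl, false_and, and_false, if_false, eq_self_iff_true, if_true]
            field_simp
          · simp only [hk, hl, false_and, and_false, if_false, if_neg (Ne.symm hlk), if_neg hlk,
              mul_zero, zero_mul]
    calc x ⬝ᵥ (Q *ᵥ x) = ∑ k, ∑ l, x k * (Q k l * x l) := by
          simp [dotProduct, Matrix.mulVec, Finset.mul_sum]
      _ = ∑ k, ∑ l, if l = k then (x k / c k)^2 else 0 := by
          exact Finset.sum_congr rfl fun k _ => Finset.sum_congr rfl fun l _ => hterm k l
      _ = ∑ k, (x k / c k)^2 := by simp
  -- Step 4: at most one negative eigenvalue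
  have hne : ∀ i j, hHerm.eigenvalues i < 0 → hHerm.eigenvalues j < 0 → i = j := by
    intro i j hi hj
    by_contra hij
    set v : Fin (n+2) → ℝ := ⇑(hHerm.eigenvectorBasis i) with hv
    set w : Fin (n+2) → ℝ := ⇑(hHerm.eigenvectorBasis j) with hw
    have horth := hHerm.eigenvectorBasis.orthonormal
    rw [orthonormal_iff_ite] at horth
    have hdot : ∀ a b, (⇑(hHerm.eigenvectorBasis a) : Fin (n+2) → ℝ) ⬝ᵥ
        ⇑(hHerm.eigenvectorBasis b) = if a = b then 1 else 0 := by
      intro a b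
      have := horth a b
      simpa [PiLp.inner_apply, RCLike.inner_apply, dotProduct, mul_comm] using this
    obtain ⟨α, β, hαβ, h0⟩ : ∃ α β : ℝ, (α ≠ 0 ∨ β ≠ 0) ∧ α * v 0 + β * w 0 = 0 := by
      by_cases hv0 : v 0 = 0
      · exact ⟨1, 0, Or.inl one_ne_zero, by simp [hv0]⟩
      · exact ⟨w 0, -(v 0), Or.inr (by simpa using hv0), by ring⟩
    set x : Fin (n+2) → ℝ := α • v + β • w with hx
    have hx0 : x 0 = 0 := by simpa [hx] using h0
    have h1 : x ⬝ᵥ (Q *ᵥ x) = hHerm.eigenvalues i * α^2 + hHerm.eigenvalues j * β^2 := by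
      rw [hx]
      rw [Matrix.mulVec_add, Matrix.mulVec_smul, Matrix.mulVec_smul, hv, hw,
        hHerm.mulVec_eigenvectorBasis, hHerm.mulVec_eigenvectorBasis]
      simp only [dotProduct_add, add_dotProduct, smul_dotProduct,
        dotProduct_smul, smul_eq_mul, smul_smul]
      rw [show ((⇑(hHerm.eigenvectorBasis i) : Fin (n+2) → ℝ) ⬝ᵥ ⇑(hHerm.eigenvectorBasis i)) = 1
          from by rw [hdot]; simp,
        show ((⇑(hHerm.eigenvectorBasis j) : Fin (n+2) → ℝ) ⬝ᵥ ⇑(hHerm.eigenvectorBasis j)) = 1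
          from by rw [hdot]; simp,
        show ((⇑(hHerm.eigenvectorBasis i) : Fin (n+2) → ℝ) ⬝ᵥ ⇑(hHerm.eigenvectorBasis j)) = 0
          from by rw [hdot]; simp [hij],
        show ((⇑(hHerm.eigenvectorBasis j) : Fin (n+2) → ℝ) ⬝ᵥ ⇑(hHerm.eigenvectorBasis i)) = 0
          from by rw [hdot]; simp [Ne.symm hij]]
      ring
    have h2 := key x hx0
    have hposα : 0 < α^2 + β^2 := by
      rcases hαβ with h | h
      · have : 0 < α^2 := by positivity
        nlinarith [sq_nonneg β]
      · have : 0 < β^2 := by positivity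
        nlinarith [sq_nonneg α]
    have hneg : hHerm.eigenvalues i * α^2 + hHerm.eigenvalues j * β^2 < 0 := by
      rcases hαβ with h | h
      · have e1 : hHerm.eigenvalues i * α^2 < 0 := mul_neg_of_neg_of_pos hi (by positivity)
        nlinarith [sq_nonneg β]
      · have e1 : hHerm.eigenvalues j * β^2 < 0 := mul_neg_of_neg_of_pos hj (by positivity)
        nlinarith [sq_nonneg α]
    have hpos : (0:ℝ) ≤ ∑ k, (x k / c k)^2 :=
      Finset.sum_nonneg fun k _ => sq_nonneg _
    rw [h1] at h2
    rw [h2] at hneg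
    exact absurd hneg (not_lt.2 hpos)
  -- Step 5: counting
  have hNcard : (univ.filter fun i => hHerm.eigenvalues i < 0).card = 1 := by
    have hle : (univ.filter fun i => hHerm.eigenvalues i < 0).card ≤ 1 :=
      Finset.card_le_one.2 fun a ha b hb =>
        hne a b (Finset.mem_filter.1 ha).2 (Finset.mem_filter.1 hb).2
    have hnonempty : (univ.filter fun i => hHerm.eigenvalues i < 0).Nonempty := by
      by_contra h
      rw [Finset.not_nonempty_iff_eq_empty, Finset.filter_eq_empty_iff] at h
      have : 0 < ∏ i, hHerm.eigenvalues i := Finset.prod_pos fun i _ =>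
        lt_of_le_of_ne (not_lt.1 (h (Finset.mem_univ i))) (Ne.symm (hnz i))
      linarith
    have := hnonempty.card_pos
    omega
  have hZcard : (univ.filter fun i => hHerm.eigenvalues i = 0).card = 0 := by
    rw [Finset.card_eq_zero, Finset.filter_eq_empty_iff]
    exact fun i _ => hnz i
  refine ⟨?_, hZcard, hNcard⟩
  have hsplit := Finset.card_filter_add_card_filter_not
    (s := (univ : Finset (Fin (n+2)))) (p := fun i => 0 < hHerm.eigenvalues i)
  have heq : (univ.filter fun i => ¬ 0 < hHerm.eigenvalues i)
      = (univ.filter fun i => hHerm.eigenvalues i < 0) := by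
    ext i
    simp only [Finset.mem_filter, Finset.mem_univ, true_and, not_lt]
    exact ⟨fun h => h.lt_of_ne (hnz i), le_of_lt⟩
  rw [heq, hNcard, Finset.card_univ, Fintype.card_fin] at hsplit
  omega
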